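/- Suppose ε_i > 0 for all i. Then v^D ≤ ṽ^D(ε) ≤ ṽ(ε) = v, where ṽ(ε) is the minimum of Σ_i C_i(u_i,x_i) over Ω̃(ε) = {((u_i,x_i))_i : (u_i,x_i) ∈ G̃_i(ε_i), Σ_i x_i = d}. Consequently 0 ≤ ṽ(ε) − ṽ^D(ε) ≤ v − v^D: the duality gap of the modified problem is nonnegative and no larger than the duality gap of the original problem; in particular, if v = v^D then ṽ(ε) = ṽ^D(ε). -/
import Mathlib


noncomputable section

/-- Feasible set of a single generator with capacity `xmax`. -/
def Gen (xmax : ℝ) : Set (ℝ × ℝ) :=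
  {ux | (ux.1 = 0 ∨ ux.1 = 1) ∧ 0 ≤ ux.2 ∧ ux.2 ≤ ux.1 * xmax}

/-- Cost of a generator. -/
def Cost (w : ℝ) (c : ℝ → ℝ) (ux : ℝ × ℝ) : ℝ := w * ux.1 + c ux.2

/-- Primal feasible set. -/
def Omega (n : ℕ) (xmax : Fin n → ℝ) (d : ℝ) : Set (Fin n → ℝ × ℝ) :=
  {X | (∀ i, X i ∈ Gen (xmax i)) ∧ ∑ i, (X i).2 = d}

/-- Lower bound `x^c,min` of possible output volumes of generator `i`. -/
def xcmin (n : ℕ) (xmax : Fin n → ℝ) (d : ℝ) (i : Fin n) : ℝ :=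
  max (d - ∑ j ∈ Finset.univ.erase i, xmax j) 0

/-- Upper bound `x^c,max` of possible output volumes of generator `i`. -/
def xcmax (n : ℕ) (xmax : Fin n → ℝ) (d : ℝ) (i : Fin n) : ℝ :=
  min d (xmax i)

/-- The modified feasible set `G̃_i(ε)`. -/
def Gtilde (xmax xcmin xcmax ε : ℝ) : Set (ℝ × ℝ) :=
  {((0 : ℝ), (0 : ℝ))} ∪
    {ux | ux.1 = 1 ∧ max (xcmin - ε) 0 ≤ ux.2 ∧ ux.2 ≤ min (xcmax + ε) xmax}

/-- Modified primal feasible set `Ω̃(ε)`. -/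
def OmegaTilde (n : ℕ) (xmax : Fin n → ℝ) (d : ℝ) (ε : Fin n → ℝ) :
    Set (Fin n → ℝ × ℝ) :=
  {X | (∀ i, X i ∈ Gtilde (xmax i) (xcmin n xmax d i) (xcmax n xmax d i) (ε i)) ∧
    ∑ i, (X i).2 = d}

/-- For `ε_i > 0`: `v^D ≤ ṽ^D(ε) ≤ ṽ(ε) = v`.  Consequently
`0 ≤ ṽ(ε) − ṽ^D(ε) ≤ v − v^D`: the duality gap of the modified problem is nonnegative and
no larger than that of the original problem; in particular `v = v^D → ṽ(ε) = ṽ^D(ε)`. -/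
theorem stmt_13 (n : ℕ) (d : ℝ) (hd : 0 < d)
    (w xmax : Fin n → ℝ) (c : Fin n → ℝ → ℝ)
    (hxmax : ∀ i, 0 < xmax i) (hw : ∀ i, 0 ≤ w i)
    (hconv : ∀ i, ConvexOn ℝ (Set.Icc 0 (xmax i)) (c i))
    (hmono : ∀ i, MonotoneOn (c i) (Set.Icc 0 (xmax i)))
    (hcont : ∀ i, ContinuousOn (c i) (Set.Icc 0 (xmax i)))
    (hc0 : ∀ i, c i 0 = 0)
    (hfeas : d ≤ ∑ i, xmax i)
    (ε : Fin n → ℝ) (hε : ∀ i, 0 < ε i)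
    (π πt : ℝ → Fin n → ℝ)
    (hπ : ∀ p i, IsGreatest ((fun ux => p * ux.2 - Cost (w i) (c i) ux) ''
        Gen (xmax i)) (π p i))
    (hπt : ∀ p i, IsGreatest ((fun ux => p * ux.2 - Cost (w i) (c i) ux) ''
        Gtilde (xmax i) (xcmin n xmax d i) (xcmax n xmax d i) (ε i)) (πt p i))
    (v vt vD vDt : ℝ)
    (hv : IsLeast {r : ℝ | ∃ X ∈ Omega n xmax d,
        r = ∑ i, Cost (w i) (c i) (X i)} v)
    (hvt : IsLeast {r : ℝ | ∃ X ∈ OmegaTilde n xmax d ε,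
        r = ∑ i, Cost (w i) (c i) (X i)} vt)
    (hvD : IsLUB (Set.range fun p => p * d - ∑ i, π p i) vD)
    (hvDt : IsLUB (Set.range fun p => p * d - ∑ i, πt p i) vDt) :
    vD ≤ vDt ∧ vDt ≤ vt ∧ vt = v
    ∧ 0 ≤ vt - vDt ∧ vt - vDt ≤ v - vD
    ∧ (v = vD → vt = vDt) := by
  -- Gtilde ⊆ Gen
  have hsub : ∀ i, Gtilde (xmax i) (xcmin n xmax d i) (xcmax n xmax d i) (ε i)
      ⊆ Gen (xmax i) := by
    intro i ux hux
    rcases hux with h | ⟨h1, h2, h3⟩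
    · simp only [Set.mem_singleton_iff] at h
      subst h
      exact ⟨Or.inl rfl, le_refl 0, by simp⟩
    · refine ⟨Or.inr h1, le_trans (le_max_right _ 0) h2, ?_⟩
      rw [h1, one_mul]
      exact le_trans h3 (min_le_right _ _)
  -- Gen ∩ feasibility ⊆ Gtilde (for feasible profiles): Omega = OmegaTilde
  have hOmega : Omega n xmax d = OmegaTilde n xmax d ε := by
    ext X
    constructor
    · rintro ⟨hG, hsum⟩
      refine ⟨fun i => ?_, hsum⟩
      have hxnn : ∀ j, 0 ≤ (X j).2 := fun j => (hG j).2.1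
      have hxle : ∀ j, (X j).2 ≤ xmax j := by
        intro j
        rcases (hG j).1 with h0 | h1
        · have := (hG j).2.2
          rw [h0, zero_mul] at this
          exact le_trans this (hxmax j).le
        · have := (hG j).2.2
          rwa [h1, one_mul] at this
      rcases (hG i).1 with h0 | h1
      · -- off: x = 0
        have hx0 : (X i).2 = 0 := le_antisymm (by
          have := (hG i).2.2; rwa [h0, zero_mul] at this) (hxnn i)
        left
        simp only [Set.mem_singleton_iff]
        exact Prod.ext h0 hx0
      · right
        refine ⟨h1, ?_, ?_⟩
        · -- lower bound
          have key : d - ∑ j ∈ Finset.univ.erase i, xmax j ≤ (X i).2 := by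
            have h1' : ∑ j ∈ Finset.univ.erase i, (X j).2 + (X i).2
                = ∑ j, (X j).2 := Finset.sum_erase_add _ _ (Finset.mem_univ i)
            have h2' : ∑ j ∈ Finset.univ.erase i, (X j).2
                ≤ ∑ j ∈ Finset.univ.erase i, xmax j :=
              Finset.sum_le_sum fun j _ => hxle j
            linarith [hsum, h1', h2']
          have hxc : xcmin n xmax d i ≤ (X i).2 := max_le key (hxnn i)
          exact max_le (by linarith [hε i, le_trans (le_max_left _ _) hxc]) (hxnn i)
        · -- upper bound
          have hxd : (X i).2 ≤ d := by
            rw [← hsum]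
            exact Finset.single_le_sum (fun j _ => hxnn j) (Finset.mem_univ i)
          have : (X i).2 ≤ xcmax n xmax d i := le_min hxd (hxle i)
          exact le_min (by linarith [hε i]) (hxle i)
    · rintro ⟨hG, hsum⟩
      exact ⟨fun i => hsub i (hG i), hsum⟩
  have hvtv : vt = v := by
    apply hvt.unique
    rw [hOmega] at hv
    exact hv
  -- πt ≤ π
  have hπle : ∀ p i, πt p i ≤ π p i := by
    intro p i
    obtain ⟨ux, hux, heq⟩ := (hπt p i).1
    rw [← heq]
    exact (hπ p i).2 ⟨ux, hsub i hux, rfl⟩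
  -- weak duality for modified problem: vDt ≤ vt
  have hwd : ∀ p, p * d - ∑ i, πt p i ≤ vt := by
    intro p
    obtain ⟨X, hX, hXval⟩ := hvt.1
    have hbound : ∀ i, p * (X i).2 - Cost (w i) (c i) (X i) ≤ πt p i :=
      fun i => (hπt p i).2 ⟨X i, hX.1 i, rfl⟩
    have : p * d - ∑ i, πt p i = ∑ i, (p * (X i).2 - πt p i) := by
      rw [Finset.sum_sub_distrib, ← Finset.mul_sum, hX.2]
    rw [this, hXval]
    exact Finset.sum_le_sum fun i _ => by linarith [hbound i]
  have hvDtvt : vDt ≤ vt := hvDt.2 (by rintro r ⟨p, rfl⟩; exact hwd p)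
  have hvDvDt : vD ≤ vDt := by
    apply hvD.2
    rintro r ⟨p, rfl⟩
    dsimp only
    have h1 : p * d - ∑ i, πt p i ≤ vDt := hvDt.1 ⟨p, rfl⟩
    have h2 : ∑ i, πt p i ≤ ∑ i, π p i :=
      Finset.sum_le_sum fun i _ => hπle p i
    linarith
  refine ⟨hvDvDt, hvDtvt, hvtv, by linarith, by linarith, fun h => by linarith⟩
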